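/- The hypergeometric function satisfies the asymptotic expansion ₂F₁(1, 7/6; 3/2; −1/ε²) = 3ε² + (√π·Γ(−1/6)/(2Γ(1/3)))·ε^(7/3) + O(ε⁴) as ε → 0⁺. -/

import Mathlib

open Filter Topology Asymptotics
open MeasureTheory Set Real

/-- The Gauss hypergeometric value `₂F₁(1, 7/6; 3/2; −1/ε²)` for `ε > 0`, defined via
Euler's integral representation
`₂F₁(a,b;c;z) = Γ(c)/(Γ(b)Γ(c−b)) ∫₀¹ t^{b−1}(1−t)^{c−b−1}(1−zt)^{−a} dt`
(valid since `Re c > Re b > 0`), with `a = 1`, `b = 7/6`, `c = 3/2`, `z = −1/ε²`. -/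
noncomputable def hyp2F1value (ε : ℝ) : ℝ :=
  Real.Gamma (3 / 2) / (Real.Gamma (7 / 6) * Real.Gamma (3 / 2 - 7 / 6)) *
    ∫ t in (0 : ℝ)..1,
      t ^ ((7 / 6 : ℝ) - 1) * (1 - t) ^ ((3 / 2 : ℝ) - (7 / 6 : ℝ) - 1) *
        (1 + t / ε ^ 2) ^ (-(1 : ℝ))

lemma contOn_aux {p q : ℝ} : ContinuousOn (fun t : ℝ => t ^ p * (1 - t) ^ q) (Ioo (0:ℝ) 1) := by
  apply ContinuousOn.mul
  · exact continuousOn_id.rpow_const fun x hx => Or.inl (ne_of_gt hx.1)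
  · exact (continuousOn_const.sub continuousOn_id).rpow_const
      fun x hx => Or.inl (by intro h; simp only [Pi.sub_apply, id_eq] at h; nlinarith [hx.2, sub_eq_zero.mp h])

lemma beta_integrable {p q : ℝ} (hp : -1 < p) (hq : -1 < q) :
    IntegrableOn (fun t : ℝ => t ^ p * (1 - t) ^ q) (Ioo (0:ℝ) 1) := by
  have key : ∀ {P Q : ℝ}, -1 < P → -1 < Q →
      IntegrableOn (fun t : ℝ => t ^ P * (1 - t) ^ Q) (Ioo (0:ℝ) (1/2)) := by
    intro P Q hP hQ
    have hb : IntegrableOn (fun t : ℝ => (((1:ℝ)/2) ^ Q + 1) * t ^ P) (Ioo (0:ℝ) (1/2)) :=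
      ((intervalIntegral.integrableOn_Ioo_rpow_iff (by norm_num)).2 hP).const_mul _
    refine hb.mono' ((contOn_aux.mono ?_).aestronglyMeasurable measurableSet_Ioo) ?_
    · exact Ioo_subset_Ioo le_rfl (by norm_num)
    filter_upwards [ae_restrict_mem measurableSet_Ioo] with t ht
    have ht0 : 0 < t := ht.1
    have ht1 : (1:ℝ)/2 ≤ 1 - t := by linarith [ht.2]
    have hrp : (0:ℝ) ≤ ((1:ℝ)/2) ^ Q := Real.rpow_nonneg (by norm_num) Q
    have h2 : (1 - t) ^ Q ≤ ((1:ℝ)/2) ^ Q + 1 := by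
      rcases le_or_gt 0 Q with h | h
      · calc (1 - t) ^ Q ≤ 1 ^ Q := Real.rpow_le_rpow (by linarith) (by linarith) h
          _ = 1 := Real.one_rpow Q
          _ ≤ _ := by linarith
      · calc (1 - t) ^ Q ≤ ((1:ℝ)/2) ^ Q :=
            Real.rpow_le_rpow_of_nonpos (by norm_num) ht1 h.le
          _ ≤ _ := by linarith
    have hnn : 0 ≤ t ^ P * (1 - t) ^ Q := by positivity
    rw [Real.norm_eq_abs, abs_of_nonneg hnn]
    calc t ^ P * (1 - t) ^ Q ≤ t ^ P * (((1:ℝ)/2) ^ Q + 1) :=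
          mul_le_mul_of_nonneg_left h2 (Real.rpow_nonneg ht0.le P)
      _ = (((1:ℝ)/2) ^ Q + 1) * t ^ P := by ring
  have h1 := key hp hq
  have h2' := key hq hp
  have h2 : IntegrableOn (fun t : ℝ => t ^ p * (1 - t) ^ q) (Ioo (1/2 : ℝ) 1) := by
    have hii : IntervalIntegrable (fun t : ℝ => t ^ q * (1 - t) ^ p) volume 0 (1/2) := by
      rw [intervalIntegrable_iff_integrableOn_Ioo_of_le (by norm_num)]
      exact h2'
    have := (hii.comp_sub_left 1).symm
    rw [show (1:ℝ) - 1/2 = 1/2 by norm_num, show (1:ℝ) - 0 = 1 by norm_num] at this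
    rw [intervalIntegrable_iff_integrableOn_Ioo_of_le (by norm_num)] at this
    refine this.congr_fun (fun t ht => ?_) measurableSet_Ioo
    simp only [sub_sub_cancel]
    ring
  have hsub : Ioo (0:ℝ) 1 ⊆ Ioo 0 (1/2) ∪ Ico (1/2) 1 := by
    intro t ht
    rcases lt_or_ge t (1/2) with h | h
    · exact Or.inl ⟨ht.1, h⟩
    · exact Or.inr ⟨h, ht.2⟩
  refine (IntegrableOn.union h1 ?_).mono_set hsub
  rwa [integrableOn_Ico_iff_integrableOn_Ioo]

lemma real_beta {a b : ℝ} (ha : 0 < a) (hb : 0 < b) :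
    ∫ t in Ioo (0:ℝ) 1, t ^ (a - 1) * (1 - t) ^ (b - 1)
      = Real.Gamma a * Real.Gamma b / Real.Gamma (a + b) := by
  have hc := Complex.Gamma_mul_Gamma_eq_betaIntegral
    (s := (a:ℂ)) (t := (b:ℂ)) (by simpa using ha) (by simpa using hb)
  have hβ : Complex.betaIntegral (a:ℂ) (b:ℂ)
      = ((∫ t in Ioo (0:ℝ) 1, t ^ (a - 1) * (1 - t) ^ (b - 1) : ℝ) : ℂ) := by
    rw [Complex.betaIntegral, intervalIntegral.integral_of_le zero_le_one,
      MeasureTheory.integral_Ioc_eq_integral_Ioo]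
    have hcast : ((∫ t in Ioo (0:ℝ) 1, t ^ (a - 1) * (1 - t) ^ (b - 1) : ℝ) : ℂ)
        = ∫ t in Ioo (0:ℝ) 1, ((t ^ (a - 1) * (1 - t) ^ (b - 1) : ℝ) : ℂ) :=
      (integral_ofReal).symm
    rw [hcast]
    refine setIntegral_congr_fun measurableSet_Ioo (fun t ht => ?_)
    have h1 : (((t:ℝ) ^ (a - 1) : ℝ) : ℂ) = ((t:ℂ) ^ ((a:ℂ) - 1) : ℂ) := by
      rw [show ((a:ℂ) - 1) = ((a - 1 : ℝ) : ℂ) by push_cast; ring,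
        Complex.ofReal_cpow ht.1.le]
    have h2 : (((1 - t : ℝ) ^ (b - 1) : ℝ) : ℂ) = ((1 - (t:ℂ)) ^ ((b:ℂ) - 1) : ℂ) := by
      rw [show ((b:ℂ) - 1) = ((b - 1 : ℝ) : ℂ) by push_cast; ring,
        Complex.ofReal_cpow (by linarith [ht.2] : (0:ℝ) ≤ 1 - t)]
      push_cast
      ring_nf
    rw [Complex.ofReal_mul, h1, h2]
  rw [hβ] at hc
  have hG : Real.Gamma (a+b) ≠ 0 := (Real.Gamma_pos_of_pos (by linarith)).ne'
  have hca : Complex.Gamma (a:ℂ) = (Real.Gamma a : ℂ) := Complex.Gamma_ofReal a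
  have hcb : Complex.Gamma (b:ℂ) = (Real.Gamma b : ℂ) := Complex.Gamma_ofReal b
  have hcab : Complex.Gamma ((a:ℂ) + b) = (Real.Gamma (a+b) : ℂ) := by
    rw [show ((a:ℂ) + b) = ((a + b : ℝ) : ℂ) by push_cast; ring]; exact Complex.Gamma_ofReal _
  rw [hca, hcb, hcab] at hc
  field_simp
  have := hc.symm
  norm_cast at this
  linarith [this]

lemma int_Ioi_eval : ∫ u in Ioi (0:ℝ), u ^ (-(5/6) : ℝ) * (1 + u)⁻¹ = 2 * π := by
  have himg : (fun t : ℝ => t / (1 - t)) '' Ioo (0:ℝ) 1 = Ioi (0:ℝ) := by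
    ext y
    constructor
    · rintro ⟨t, ht, rfl⟩
      exact div_pos ht.1 (by linarith [ht.2])
    · intro hy
      have hy0 : (0:ℝ) < y := hy
      refine ⟨y / (1 + y), ⟨div_pos hy0 (by linarith), ?_⟩, ?_⟩
      · rw [div_lt_one (by linarith)]; linarith
      · have h1y : (1:ℝ) + y ≠ 0 := by positivity
        field_simp
        ring
  have hderiv : ∀ t ∈ Ioo (0:ℝ) 1, HasDerivWithinAt (fun t : ℝ => t / (1 - t))
      (((1 - t) ^ 2)⁻¹) (Ioo (0:ℝ) 1) t := by
    intro t ht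
    have h1t : (1:ℝ) - t ≠ 0 := ne_of_gt (by linarith [ht.2])
    have := (hasDerivAt_id t).div ((hasDerivAt_id t).const_sub 1) h1t
    refine this.hasDerivWithinAt.congr_deriv ?_
    simp only [id]
    rw [div_eq_iff (pow_ne_zero 2 h1t), inv_mul_cancel₀ (pow_ne_zero 2 h1t)]
    ring
  have hinj : InjOn (fun t : ℝ => t / (1 - t)) (Ioo (0:ℝ) 1) := by
    intro x hx y hy h
    have hx1 : (1:ℝ) - x ≠ 0 := ne_of_gt (by linarith [hx.2])
    have hy1 : (1:ℝ) - y ≠ 0 := ne_of_gt (by linarith [hy.2])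
    field_simp at h
    nlinarith [h]
  have hs := integral_image_eq_integral_abs_deriv_smul measurableSet_Ioo hderiv hinj
    (fun u : ℝ => u ^ (-(5/6) : ℝ) * (1 + u)⁻¹)
  rw [himg] at hs
  rw [hs]
  have heq : EqOn (fun t : ℝ => |((1 - t) ^ 2)⁻¹| •
      ((t / (1 - t)) ^ (-(5/6) : ℝ) * (1 + t / (1 - t))⁻¹))
      (fun t : ℝ => t ^ ((1/6 : ℝ) - 1) * (1 - t) ^ ((5/6 : ℝ) - 1)) (Ioo (0:ℝ) 1) := by
    intro t ht
    have ht0 : 0 < t := ht.1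
    have h1t : (0:ℝ) < 1 - t := by linarith [ht.2]
    have h1 : 1 + t / (1 - t) = (1 - t)⁻¹ := by field_simp; ring
    simp only [smul_eq_mul]
    rw [show (1:ℝ)/6 - 1 = -(5/6) by norm_num, show (5:ℝ)/6 - 1 = -(1/6) by norm_num,
      h1, inv_inv, Real.div_rpow ht0.le h1t.le, abs_of_nonneg (by positivity : (0:ℝ) ≤ ((1-t)^2)⁻¹),
      show ((1-t)^2)⁻¹ = (1-t) ^ (-2:ℝ) by
        rw [← Real.rpow_natCast (1-t) 2, ← Real.rpow_neg h1t.le]; norm_num,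
      div_eq_mul_inv,
      show ((1-t) ^ (-(5/6):ℝ))⁻¹ = (1-t) ^ ((5:ℝ)/6) by
        rw [← Real.rpow_neg h1t.le]; norm_num]
    have key : (1-t) ^ (-2:ℝ) * ((1-t) ^ ((5:ℝ)/6) * (1-t) ^ (1:ℝ)) = (1-t) ^ (-(1/6):ℝ) := by
      rw [← Real.rpow_add h1t, ← Real.rpow_add h1t]; norm_num
    rw [Real.rpow_one] at key
    linear_combination t ^ (-(5/6):ℝ) * key
  rw [setIntegral_congr_fun measurableSet_Ioo heq,
    real_beta (by norm_num : (0:ℝ) < 1/6) (by norm_num : (0:ℝ) < 5/6)]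
  rw [show (1:ℝ)/6 + 5/6 = 1 by norm_num, Real.Gamma_one]
  have hrefl := Real.Gamma_mul_Gamma_one_sub (1/6)
  rw [show (1:ℝ) - 1/6 = 5/6 by norm_num, show π * (1/6) = π/6 by ring,
    Real.sin_pi_div_six] at hrefl
  rw [hrefl]
  ring

lemma integrable_Q {c : ℝ} (hc : 0 < c) :
    IntegrableOn (fun t : ℝ => t ^ (-(5/6) : ℝ) * (t + c)⁻¹) (Ioi (0:ℝ)) := by
  have hmeas : ∀ s : Set ℝ, s ⊆ Ioi 0 → MeasurableSet s →
      AEStronglyMeasurable (fun t : ℝ => t ^ (-(5/6) : ℝ) * (t + c)⁻¹) (volume.restrict s) := by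
    intro s hs hsm
    refine (ContinuousOn.aestronglyMeasurable ?_ hsm)
    refine ContinuousOn.mul ((continuousOn_id.rpow_const fun x hx => Or.inl (ne_of_gt (hs hx)))) ?_
    exact ContinuousOn.inv₀ (continuousOn_id.add continuousOn_const)
      (fun x hx => by have h0 := hs hx; have : (0:ℝ) < x := h0; positivity)
  have h1 : IntegrableOn (fun t : ℝ => t ^ (-(5/6) : ℝ) * (t + c)⁻¹) (Ioo (0:ℝ) 1) := by
    have hb : IntegrableOn (fun t : ℝ => c⁻¹ * t ^ (-(5/6) : ℝ)) (Ioo (0:ℝ) 1) :=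
      ((intervalIntegral.integrableOn_Ioo_rpow_iff one_pos).2 (by norm_num)).const_mul _
    refine hb.mono' (hmeas _ (fun x hx => hx.1) measurableSet_Ioo) ?_
    filter_upwards [ae_restrict_mem measurableSet_Ioo] with t ht
    have ht0 : 0 < t := ht.1
    rw [Real.norm_eq_abs, abs_of_nonneg (by positivity)]
    have : (t + c)⁻¹ ≤ c⁻¹ := by
      apply inv_anti₀ hc
      linarith
    calc t ^ (-(5/6):ℝ) * (t + c)⁻¹ ≤ t ^ (-(5/6):ℝ) * c⁻¹ :=
          mul_le_mul_of_nonneg_left this (by positivity)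
      _ = c⁻¹ * t ^ (-(5/6):ℝ) := by ring
  have h2 : IntegrableOn (fun t : ℝ => t ^ (-(5/6) : ℝ) * (t + c)⁻¹) (Ici (1:ℝ)) := by
    have hb : IntegrableOn (fun t : ℝ => t ^ (-(11/6) : ℝ)) (Ioi (1:ℝ)) :=
      integrableOn_Ioi_rpow_of_lt (by norm_num) one_pos
    rw [integrableOn_Ici_iff_integrableOn_Ioi]
    refine hb.mono' (hmeas _ (fun x hx => show (0:ℝ) < x from lt_trans one_pos hx) measurableSet_Ioi) ?_
    filter_upwards [ae_restrict_mem measurableSet_Ioi] with t ht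
    have ht1 : (1:ℝ) < t := ht
    have ht0 : (0:ℝ) < t := lt_trans one_pos ht1
    rw [Real.norm_eq_abs, abs_of_nonneg (by positivity)]
    have h3 : (t + c)⁻¹ ≤ t⁻¹ := by
      apply inv_anti₀ ht0; linarith
    calc t ^ (-(5/6):ℝ) * (t + c)⁻¹ ≤ t ^ (-(5/6):ℝ) * t⁻¹ :=
          mul_le_mul_of_nonneg_left h3 (by positivity)
      _ = t ^ (-(11/6):ℝ) := by
          rw [← Real.rpow_neg_one t, ← Real.rpow_add ht0]; norm_num
  have hsub : Ioi (0:ℝ) ⊆ Ioo 0 1 ∪ Ici 1 := by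
    intro t ht
    rcases lt_or_ge t 1 with h | h
    · exact Or.inl ⟨ht, h⟩
    · exact Or.inr h
  exact (h1.union h2).mono_set hsub

lemma int_Q {c : ℝ} (hc : 0 < c) :
    ∫ t in Ioi (0:ℝ), t ^ (-(5/6) : ℝ) * (t + c)⁻¹ = c ^ (-(5/6) : ℝ) * (2 * π) := by
  have hs := integral_comp_mul_left_Ioi (fun t : ℝ => t ^ (-(5/6) : ℝ) * (t + c)⁻¹) 0 hc
  rw [mul_zero] at hs
  have heq : EqOn (fun x : ℝ => (c * x) ^ (-(5/6) : ℝ) * (c * x + c)⁻¹)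
      (fun x : ℝ => (c ^ (-(5/6):ℝ) * c⁻¹) * (x ^ (-(5/6) : ℝ) * (1 + x)⁻¹)) (Ioi (0:ℝ)) := by
    intro x hx
    have hx0 : (0:ℝ) < x := hx
    simp only
    rw [Real.mul_rpow hc.le hx0.le, show c * x + c = c * (1 + x) by ring,
      mul_inv]
    ring
  rw [setIntegral_congr_fun measurableSet_Ioi heq, integral_const_mul, int_Ioi_eval] at hs
  have := hs.symm
  rw [smul_eq_mul] at this
  have hcne : c⁻¹ ≠ 0 := inv_ne_zero hc.ne'
  field_simp at this ⊢
  linarith [this]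

lemma gamma32 : Real.Gamma (3/2) = (1/2) * Real.Gamma (1/2) := by
  rw [show (3:ℝ)/2 = 1/2 + 1 by norm_num, Real.Gamma_add_one (by norm_num)]

lemma gamma76 : Real.Gamma (7/6) = (1/6) * Real.Gamma (1/6) := by
  rw [show (7:ℝ)/6 = 1/6 + 1 by norm_num, Real.Gamma_add_one (by norm_num)]

lemma gamma_neg16 : Real.Gamma (-(1/6)) = -6 * Real.Gamma (5/6) := by
  have h := Real.Gamma_add_one (s := -(1/6)) (by norm_num)
  rw [show -(1/6 : ℝ) + 1 = 5/6 by norm_num] at h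
  linarith

lemma gamma_refl : Real.Gamma (1/6) * Real.Gamma (5/6) = 2 * π := by
  have h := Real.Gamma_mul_Gamma_one_sub (1/6)
  rw [show (1:ℝ) - 1/6 = 5/6 by norm_num, show π * (1/6 : ℝ) = π/6 by ring,
    Real.sin_pi_div_six] at h
  rw [h]; ring

lemma CB_eq : Real.Gamma (3/2) / (Real.Gamma (7/6) * Real.Gamma (3/2 - 7/6)) *
    (Real.Gamma (1/6) * Real.Gamma (1/3) / Real.Gamma (1/2)) = 3 := by
  rw [show (3:ℝ)/2 - 7/6 = 1/3 by norm_num, gamma32, gamma76]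
  have h1 : 0 < Real.Gamma (1/6) := Real.Gamma_pos_of_pos (by norm_num)
  have h2 : 0 < Real.Gamma (1/3) := Real.Gamma_pos_of_pos (by norm_num)
  have h3 : 0 < Real.Gamma (1/2) := Real.Gamma_pos_of_pos (by norm_num)
  field_simp
  ring

lemma K_eq : Real.sqrt Real.pi * Real.Gamma (-(1/6)) / (2 * Real.Gamma (1/3))
    = -(2*π) * (Real.Gamma (3/2) / (Real.Gamma (7/6) * Real.Gamma (3/2 - 7/6))) := by
  rw [show (3:ℝ)/2 - 7/6 = 1/3 by norm_num, gamma32, gamma76, gamma_neg16,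
    Real.Gamma_one_half_eq]
  have h1 : 0 < Real.Gamma (1/6) := Real.Gamma_pos_of_pos (by norm_num)
  have h2 : 0 < Real.Gamma (1/3) := Real.Gamma_pos_of_pos (by norm_num)
  have h4 : 0 < Real.Gamma (5/6) := Real.Gamma_pos_of_pos (by norm_num)
  have h5 : (0:ℝ) < Real.sqrt π := Real.sqrt_pos.mpr Real.pi_pos
  have hrefl := gamma_refl
  field_simp
  linear_combination (-1) * hrefl

lemma hbeta_val : ∫ t in Ioo (0:ℝ) 1, t ^ (-(5/6):ℝ) * (1-t) ^ (-(2/3):ℝ)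
    = Real.Gamma (1/6) * Real.Gamma (1/3) / Real.Gamma (1/2) := by
  have h := real_beta (a := 1/6) (b := 1/3) (by norm_num) (by norm_num)
  rw [show (1:ℝ)/6 - 1 = -(5/6) by norm_num, show (1:ℝ)/3 - 1 = -(2/3) by norm_num,
    show (1:ℝ)/6 + 1/3 = 1/2 by norm_num] at h
  exact h

-- key pointwise inequality

lemma fR_le_fbeta {c t : ℝ} (hc : 0 < c) (ht : t ∈ Ioo (0:ℝ) 1) :
    t ^ (-(5/6):ℝ) * ((1-t) ^ (-(2/3):ℝ) - 1) * (t+c)⁻¹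
      ≤ t ^ (-(5/6):ℝ) * (1-t) ^ (-(2/3):ℝ) := by
  have ht0 : 0 < t := ht.1
  have h1t : (0:ℝ) < 1 - t := by linarith [ht.2]
  have hA0 : (0:ℝ) ≤ (1-t) ^ (-(2/3):ℝ) := Real.rpow_nonneg h1t.le _
  have e0 : (1-t) ^ (1:ℝ) * (1-t) ^ (-(2/3):ℝ) = (1-t) ^ ((1:ℝ)/3) := by
    rw [← Real.rpow_add h1t]; norm_num
  rw [Real.rpow_one] at e0
  have e2 : (1-t) ^ ((1:ℝ)/3) ≤ 1 := Real.rpow_le_one h1t.le (by linarith) (by norm_num)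
  have e1 : (1-t) ^ (-(2/3):ℝ) - 1 ≤ t * (1-t) ^ (-(2/3):ℝ) := by nlinarith [e0, e2]
  have hu0 : (0:ℝ) ≤ (t+c)⁻¹ := by positivity
  have htu : t * (t+c)⁻¹ ≤ 1 := by
    rw [← div_eq_mul_inv, div_le_one (by linarith)]; linarith
  have ha0 : (0:ℝ) ≤ t ^ (-(5/6):ℝ) := Real.rpow_nonneg ht0.le _
  calc t ^ (-(5/6):ℝ) * ((1-t) ^ (-(2/3):ℝ) - 1) * (t+c)⁻¹
      ≤ t ^ (-(5/6):ℝ) * (t * (1-t) ^ (-(2/3):ℝ)) * (t+c)⁻¹ := by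
        apply mul_le_mul_of_nonneg_right _ hu0
        exact mul_le_mul_of_nonneg_left e1 ha0
    _ = (t ^ (-(5/6):ℝ) * (1-t) ^ (-(2/3):ℝ)) * (t * (t+c)⁻¹) := by ring
    _ ≤ (t ^ (-(5/6):ℝ) * (1-t) ^ (-(2/3):ℝ)) * 1 := by
        apply mul_le_mul_of_nonneg_left htu (by positivity)
    _ = t ^ (-(5/6):ℝ) * (1-t) ^ (-(2/3):ℝ) := by ring

lemma fR_nonneg {c t : ℝ} (hc : 0 < c) (ht : t ∈ Ioo (0:ℝ) 1) :
    0 ≤ t ^ (-(5/6):ℝ) * ((1-t) ^ (-(2/3):ℝ) - 1) * (t+c)⁻¹ := by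
  have ht0 : 0 < t := ht.1
  have h1t : (0:ℝ) < 1 - t := by linarith [ht.2]
  have hA1 : (1:ℝ) ≤ (1-t) ^ (-(2/3):ℝ) :=
    Real.one_le_rpow_of_pos_of_le_one_of_nonpos h1t (by linarith) (by norm_num)
  have ha0 : (0:ℝ) ≤ t ^ (-(5/6):ℝ) := Real.rpow_nonneg ht0.le _
  have hu0 : (0:ℝ) ≤ (t+c)⁻¹ := by positivity
  have : 0 ≤ (1-t) ^ (-(2/3):ℝ) - 1 := by linarith
  positivity

lemma contOn_fR {c : ℝ} (hc : 0 < c) :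
    ContinuousOn (fun t : ℝ => t ^ (-(5/6):ℝ) * ((1-t) ^ (-(2/3):ℝ) - 1) * (t+c)⁻¹)
      (Ioo (0:ℝ) 1) := by
  apply ContinuousOn.mul
  · apply ContinuousOn.mul
    · exact continuousOn_id.rpow_const fun x hx => Or.inl (ne_of_gt hx.1)
    · apply ContinuousOn.sub _ continuousOn_const
      exact (continuousOn_const.sub continuousOn_id).rpow_const
        fun x hx => Or.inl (by exact sub_ne_zero.mpr (ne_of_gt hx.2))
  · exact ContinuousOn.inv₀ (continuousOn_id.add continuousOn_const)
      (fun x hx => ne_of_gt (add_pos hx.1 hc))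

lemma integrable_fR {c : ℝ} (hc : 0 < c) :
    IntegrableOn (fun t : ℝ => t ^ (-(5/6):ℝ) * ((1-t) ^ (-(2/3):ℝ) - 1) * (t+c)⁻¹)
      (Ioo (0:ℝ) 1) := by
  refine (beta_integrable (p := -(5/6)) (q := -(2/3)) (by norm_num) (by norm_num)).mono'
    ((contOn_fR hc).aestronglyMeasurable measurableSet_Ioo) ?_
  filter_upwards [ae_restrict_mem measurableSet_Ioo] with t ht
  rw [Real.norm_eq_abs, abs_of_nonneg (fR_nonneg hc ht)]
  exact fR_le_fbeta hc ht

lemma R1_bounds {c : ℝ} (hc : 0 < c) :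
    0 ≤ (∫ t in Ioo (0:ℝ) 1, t ^ (-(5/6):ℝ) * ((1-t) ^ (-(2/3):ℝ) - 1) * (t+c)⁻¹) ∧
    (∫ t in Ioo (0:ℝ) 1, t ^ (-(5/6):ℝ) * ((1-t) ^ (-(2/3):ℝ) - 1) * (t+c)⁻¹)
      ≤ Real.Gamma (1/6) * Real.Gamma (1/3) / Real.Gamma (1/2) := by
  constructor
  · exact setIntegral_nonneg measurableSet_Ioo (fun t ht => fR_nonneg hc ht)
  · rw [← hbeta_val]
    exact setIntegral_mono_on (integrable_fR hc)
      (beta_integrable (by norm_num) (by norm_num)) measurableSet_Ioo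
      (fun t ht => fR_le_fbeta hc ht)

lemma R2_bounds {c : ℝ} (hc : 0 < c) :
    0 ≤ (∫ t in Ici (1:ℝ), t ^ (-(5/6):ℝ) * (t+c)⁻¹) ∧
    (∫ t in Ici (1:ℝ), t ^ (-(5/6):ℝ) * (t+c)⁻¹) ≤ 6/5 := by
  have hfP_Ici : IntegrableOn (fun t : ℝ => t ^ (-(5/6):ℝ) * (t+c)⁻¹) (Ici (1:ℝ)) :=
    (integrable_Q hc).mono_set (fun x hx => show (0:ℝ) < x from lt_of_lt_of_le one_pos hx)
  constructor
  · refine setIntegral_nonneg measurableSet_Ici (fun t ht => ?_)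
    have ht0 : (0:ℝ) < t := lt_of_lt_of_le one_pos ht
    positivity
  · have hb : IntegrableOn (fun t : ℝ => t ^ (-(11/6) : ℝ)) (Ici (1:ℝ)) := by
      rw [integrableOn_Ici_iff_integrableOn_Ioi]
      exact integrableOn_Ioi_rpow_of_lt (by norm_num) one_pos
    have hmono := setIntegral_mono_on hfP_Ici hb measurableSet_Ici (fun t ht => ?_)
    · refine hmono.trans ?_
      rw [MeasureTheory.integral_Ici_eq_integral_Ioi,
        integral_Ioi_rpow_of_lt (by norm_num) one_pos]
      rw [Real.one_rpow]
      norm_num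
    · have ht1 : (1:ℝ) ≤ t := ht
      have ht0 : (0:ℝ) < t := lt_of_lt_of_le one_pos ht1
      have h3 : (t + c)⁻¹ ≤ t⁻¹ := by
        apply inv_anti₀ ht0; linarith
      calc t ^ (-(5/6):ℝ) * (t + c)⁻¹ ≤ t ^ (-(5/6):ℝ) * t⁻¹ :=
            mul_le_mul_of_nonneg_left h3 (by positivity)
        _ = t ^ (-(11/6):ℝ) := by
            rw [← Real.rpow_neg_one t, ← Real.rpow_add ht0]; norm_num

lemma main_decomp {c : ℝ} (hc : 0 < c) :
    (∫ t in Ioo (0:ℝ) 1,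
        t ^ ((7/6:ℝ) - 1) * (1 - t) ^ ((3/2:ℝ) - (7/6:ℝ) - 1) * (1 + t / c) ^ (-(1:ℝ)))
      = c * (Real.Gamma (1/6) * Real.Gamma (1/3) / Real.Gamma (1/2))
        - c^2 * ((∫ t in Ioo (0:ℝ) 1, t ^ (-(5/6):ℝ) * ((1-t) ^ (-(2/3):ℝ) - 1) * (t+c)⁻¹)
          + (c ^ (-(5/6):ℝ) * (2*π)
             - ∫ t in Ici (1:ℝ), t ^ (-(5/6):ℝ) * (t+c)⁻¹)) := by
  have hβ_int : IntegrableOn (fun t : ℝ => t ^ (-(5/6):ℝ) * (1-t) ^ (-(2/3):ℝ)) (Ioo (0:ℝ) 1) :=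
    beta_integrable (by norm_num) (by norm_num)
  have hfP_Ioo : IntegrableOn (fun t : ℝ => t ^ (-(5/6):ℝ) * (t+c)⁻¹) (Ioo (0:ℝ) 1) :=
    (integrable_Q hc).mono_set (fun x hx => hx.1)
  have hfP_Ici : IntegrableOn (fun t : ℝ => t ^ (-(5/6):ℝ) * (t+c)⁻¹) (Ici (1:ℝ)) :=
    (integrable_Q hc).mono_set (fun x hx => show (0:ℝ) < x from lt_of_lt_of_le one_pos hx)
  have hfR_int := integrable_fR hc
  have hfJ_int : IntegrableOn
      (fun t : ℝ => t ^ (-(5/6):ℝ) * ((1-t) ^ (-(2/3):ℝ) - 1) * (t+c)⁻¹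
        + t ^ (-(5/6):ℝ) * (t+c)⁻¹) (Ioo (0:ℝ) 1) := hfR_int.add hfP_Ioo
  -- step 1 : pointwise rewrite of original integrand
  have step1 : (∫ t in Ioo (0:ℝ) 1,
        t ^ ((7/6:ℝ) - 1) * (1 - t) ^ ((3/2:ℝ) - (7/6:ℝ) - 1) * (1 + t / c) ^ (-(1:ℝ)))
      = ∫ t in Ioo (0:ℝ) 1,
          (c * (t ^ (-(5/6):ℝ) * (1-t) ^ (-(2/3):ℝ))
            - c^2 * (t ^ (-(5/6):ℝ) * ((1-t) ^ (-(2/3):ℝ) - 1) * (t+c)⁻¹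
                + t ^ (-(5/6):ℝ) * (t+c)⁻¹)) := by
    refine setIntegral_congr_fun measurableSet_Ioo (fun t ht => ?_)
    have ht0 : 0 < t := ht.1
    have h1t : (0:ℝ) < 1 - t := by linarith [ht.2]
    have htc : (0:ℝ) < t + c := by linarith
    have h1tc : (0:ℝ) < 1 + t / c := by positivity
    rw [show (7/6:ℝ) - 1 = 1/6 by norm_num, show (3/2:ℝ) - 7/6 - 1 = -(2/3) by norm_num,
      Real.rpow_neg_one]
    have hinv : (1 + t / c)⁻¹ = c * (t + c)⁻¹ := by
      rw [show 1 + t / c = (t + c) / c by field_simp; ring, inv_div, div_eq_mul_inv]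
    rw [hinv]
    have ht16 : t ^ ((1:ℝ)/6) = t ^ (-(5/6):ℝ) * t := by
      nth_rewrite 3 [← Real.rpow_one t]
      rw [← Real.rpow_add ht0]; norm_num
    rw [ht16]
    have hfrac : c * (t + c)⁻¹ = 1 - t * (t+c)⁻¹ := by
      field_simp
      ring
    rw [hfrac]
    field_simp
    ring
  rw [step1]
  rw [integral_sub (hβ_int.const_mul c) (hfJ_int.const_mul (c^2)),
    integral_const_mul, integral_const_mul, hbeta_val,
    integral_add hfR_int hfP_Ioo]
  -- now handle ∫_{Ioo} fP
  have hun : Ioo (0:ℝ) 1 ∪ Ici 1 = Ioi 0 := by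
    ext x
    simp only [mem_union, mem_Ioo, mem_Ici, mem_Ioi]
    constructor
    · rintro (⟨h, _⟩ | h)
      · exact h
      · linarith
    · intro h
      rcases lt_or_ge x 1 with h1 | h1
      · exact Or.inl ⟨h, h1⟩
      · exact Or.inr h1
  have hdisj : Disjoint (Ioo (0:ℝ) 1) (Ici (1:ℝ)) := by
    rw [Set.disjoint_left]
    rintro x ⟨_, h1⟩ h2
    exact absurd h1 (not_lt.mpr h2)
  have hsplit := setIntegral_union hdisj measurableSet_Ici hfP_Ioo hfP_Ici
  rw [hun, int_Q hc] at hsplit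
  have : (∫ t in Ioo (0:ℝ) 1, t ^ (-(5/6):ℝ) * (t+c)⁻¹)
      = c ^ (-(5/6):ℝ) * (2*π) - ∫ t in Ici (1:ℝ), t ^ (-(5/6):ℝ) * (t+c)⁻¹ := by
    linarith [hsplit]
  rw [this]

/-- Asymptotic expansion
`₂F₁(1, 7/6; 3/2; −1/ε²) = 3ε² + (√π·Γ(−1/6)/(2Γ(1/3)))·ε^(7/3) + O(ε⁴)` as `ε → 0⁺`. -/
theorem hyp2F1_asymptotic :
    (fun ε : ℝ => hyp2F1value ε -
        (3 * ε ^ 2 +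
          Real.sqrt Real.pi * Real.Gamma (-(1 / 6)) / (2 * Real.Gamma (1 / 3)) *
            ε ^ ((7 : ℝ) / 3)))
      =O[𝓝[>] (0 : ℝ)] fun ε : ℝ => ε ^ 4 := by
  rw [isBigO_iff]
  refine ⟨|Real.Gamma (3/2) / (Real.Gamma (7/6) * Real.Gamma (3/2 - 7/6))| *
    (Real.Gamma (1/6) * Real.Gamma (1/3) / Real.Gamma (1/2) + 6/5), ?_⟩
  filter_upwards [Ioo_mem_nhdsGT_of_mem
    (by constructor <;> norm_num : (0:ℝ) ∈ Ico (0:ℝ) 1)] with ε hε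
  obtain ⟨hε0, hε1⟩ := hε
  have hc : (0:ℝ) < ε ^ 2 := by positivity
  set C := Real.Gamma (3/2) / (Real.Gamma (7/6) * Real.Gamma (3/2 - 7/6)) with hCdef
  set B' := Real.Gamma (1/6) * Real.Gamma (1/3) / Real.Gamma (1/2) with hBdef
  set R1 := ∫ t in Ioo (0:ℝ) 1,
    t ^ (-(5/6):ℝ) * ((1-t) ^ (-(2/3):ℝ) - 1) * (t + ε ^ 2)⁻¹ with hR1def
  set R2 := ∫ t in Ici (1:ℝ), t ^ (-(5/6):ℝ) * (t + ε ^ 2)⁻¹ with hR2def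
  have hval : hyp2F1value ε
      = C * (ε ^ 2 * B' - (ε ^ 2) ^ 2 * (R1 + ((ε ^ 2) ^ (-(5/6):ℝ) * (2*π) - R2))) := by
    rw [hyp2F1value, intervalIntegral.integral_of_le zero_le_one,
      MeasureTheory.integral_Ioc_eq_integral_Ioo, main_decomp hc]
  have hpow1 : (ε ^ 2) ^ 2 * ((ε ^ 2) ^ (-(5/6):ℝ) * (2*π)) = 2 * π * ε ^ ((7:ℝ)/3) := by
    have h1 : ((ε ^ 2 : ℝ)) ^ (-(5/6):ℝ) = ε ^ (-(5/3):ℝ) := by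
      rw [← Real.rpow_natCast ε 2, ← Real.rpow_mul hε0.le]
      norm_num
    rw [h1, show ((ε ^ 2:ℝ)) ^ 2 = ε ^ (4:ℕ) by ring, ← Real.rpow_natCast ε 4]
    rw [← mul_assoc, ← Real.rpow_add hε0]
    norm_num
    ring
  have h3 : C * B' = 3 := CB_eq
  have hK : Real.sqrt Real.pi * Real.Gamma (-(1 / 6)) / (2 * Real.Gamma (1 / 3))
      = -(2*π) * C := K_eq
  have hdiff : hyp2F1value ε -
      (3 * ε ^ 2 + Real.sqrt Real.pi * Real.Gamma (-(1 / 6)) / (2 * Real.Gamma (1 / 3)) *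
        ε ^ ((7:ℝ)/3)) = -C * ε ^ 4 * (R1 - R2) := by
    rw [hval, hK]
    linear_combination ε ^ 2 * h3 - C * hpow1
  rw [hdiff]
  have hR1 := R1_bounds hc
  have hR2 := R2_bounds hc
  rw [← hR1def, ← hBdef] at hR1
  rw [← hR2def] at hR2
  have habs : |R1 - R2| ≤ B' + 6/5 := by
    rw [abs_le]; constructor <;> [linarith [hR1.1, hR2.2]; linarith [hR1.2, hR2.1]]
  rw [Real.norm_eq_abs, Real.norm_eq_abs, abs_of_nonneg (by positivity : (0:ℝ) ≤ ε ^ 4)]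
  calc |(-C) * ε ^ 4 * (R1 - R2)| = |C| * ε ^ 4 * |R1 - R2| := by
        rw [abs_mul, abs_mul, abs_neg, abs_of_nonneg (by positivity : (0:ℝ) ≤ ε ^ 4)]
    _ ≤ |C| * ε ^ 4 * (B' + 6/5) := by
        apply mul_le_mul_of_nonneg_left habs (by positivity)
    _ = |C| * (B' + 6/5) * ε ^ 4 := by ring
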